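/- Let α ∈ ℝ and let a, b be nonzero complex numbers. For every continuous function Φ : ℝ → ℂ with compact support: (i) the operator Φ(H₀⁺) − ι*∘Φ(H₀)∘ι on ℓ²(ℤ₊;ℂ²) is compact, and (ii) the operators P∘Φ(H₀)∘P^⊥ and P^⊥∘Φ(H₀)∘P on ℓ²(ℤ;ℂ²) are compact; here Φ(T) denotes the continuous functional calculus of the bounded self-adjoint operator T applied to Φ. -/

import Mathlib

open Complex

set_option maxHeartbeats 1000000
set_option synthInstance.maxHeartbeats 1000000

noncomputable section

/-! ### Auxiliary general lemmas -/

lemma aux_coord_le (x : EuclideanSpace ℂ (Fin 2)) (i : Fin 2) : ‖x i‖ ≤ ‖x‖ := by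
  rw [EuclideanSpace.norm_eq]
  rw [show ‖x i‖ = Real.sqrt (‖x i‖ ^ 2) from (Real.sqrt_sq (norm_nonneg _)).symm]
  exact Real.sqrt_le_sqrt (Finset.single_le_sum (f := fun j => ‖x j‖ ^ 2)
    (fun j _ => sq_nonneg _) (Finset.mem_univ i))

lemma aux_rankOne_compact {X Y : Type*} [NormedAddCommGroup X] [NormedSpace ℂ X]
    [NormedAddCommGroup Y] [NormedSpace ℂ Y]
    (φ : X → ℂ) (C : ℝ) (hφ : ∀ u, ‖φ u‖ ≤ C * ‖u‖) (e : Y) :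
    IsCompactOperator (fun u => φ u • e) := by
  refine ⟨(fun c : ℂ => c • e) '' Metric.closedBall 0 (|C| + 1), ?_, ?_⟩
  · exact (isCompact_closedBall 0 _).image (by continuity)
  · refine Filter.mem_of_superset (Metric.closedBall_mem_nhds 0 one_pos) ?_
    intro u hu
    refine ⟨φ u, ?_, rfl⟩
    simp only [Metric.mem_closedBall, dist_zero_right] at hu ⊢
    calc ‖φ u‖ ≤ C * ‖u‖ := hφ u
    _ ≤ |C| * 1 := by
        apply mul_le_mul (le_abs_self C) hu (norm_nonneg u) (abs_nonneg C)
    _ ≤ |C| + 1 := by linarith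

lemma aux_compact_of_approx {X Y : Type*} [NormedAddCommGroup X] [NormedSpace ℂ X]
    [NormedAddCommGroup Y] [NormedSpace ℂ Y] [CompleteSpace Y]
    (D : X →L[ℂ] Y) (C : ℝ)
    (h : ∀ n : ℕ, ∃ Dn : X →L[ℂ] Y, IsCompactOperator ⇑Dn ∧ ‖D - Dn‖ ≤ C / (n + 1)) :
    IsCompactOperator ⇑D := by
  choose Dn hc hb using h
  refine isCompactOperator_of_tendsto (l := Filter.atTop) (F := Dn) ?_
    (Filter.Eventually.of_forall hc)
  rw [tendsto_iff_norm_sub_tendsto_zero]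
  have hCn : Filter.Tendsto (fun n : ℕ => C * (1 / ((n : ℝ) + 1))) Filter.atTop
      (nhds (C * 0)) :=
    tendsto_one_div_add_atTop_nhds_zero_nat.const_mul C
  rw [mul_zero] at hCn
  refine squeeze_zero (g := fun n : ℕ => C * (1 / ((n : ℝ) + 1))) (fun n => norm_nonneg _)
    (fun n => ?_) hCn
  rw [norm_sub_rev]; simpa [mul_one_div, div_eq_mul_inv] using hb n

lemma aux_add_compact {X Y : Type*} [NormedAddCommGroup X] [NormedSpace ℂ X]
    [NormedAddCommGroup Y] [NormedSpace ℂ Y] {S T : X →L[ℂ] Y}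
    (hS : IsCompactOperator ⇑S) (hT : IsCompactOperator ⇑T) :
    IsCompactOperator ⇑(S + T) := by
  rw [ContinuousLinearMap.coe_add']; exact hS.add hT

lemma aux_neg_compact {X Y : Type*} [NormedAddCommGroup X] [NormedSpace ℂ X]
    [NormedAddCommGroup Y] [NormedSpace ℂ Y] {S : X →L[ℂ] Y}
    (hS : IsCompactOperator ⇑S) : IsCompactOperator ⇑(-S) := by
  have : ⇑(-S) = -⇑S := rfl
  rw [this]; exact hS.neg

lemma aux_comp_left {X Y Z : Type*} [NormedAddCommGroup X] [NormedSpace ℂ X]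
    [NormedAddCommGroup Y] [NormedSpace ℂ Y] [NormedAddCommGroup Z] [NormedSpace ℂ Z]
    (T : Y →L[ℂ] Z) {S : X →L[ℂ] Y} (h : IsCompactOperator ⇑S) :
    IsCompactOperator ⇑(T ∘L S) := by
  rw [ContinuousLinearMap.coe_comp']; exact h.clm_comp T

lemma aux_comp_right {X Y Z : Type*} [NormedAddCommGroup X] [NormedSpace ℂ X]
    [NormedAddCommGroup Y] [NormedSpace ℂ Y] [NormedAddCommGroup Z] [NormedSpace ℂ Z]
    (T : X →L[ℂ] Y) {S : Y →L[ℂ] Z} (h : IsCompactOperator ⇑S) :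
    IsCompactOperator ⇑(S ∘L T) := by
  rw [ContinuousLinearMap.coe_comp']; exact h.comp_clm T

/-! ### The two ℓ² spaces -/

abbrev EEaux := lp (fun _ : ℤ => EuclideanSpace ℂ (Fin 2)) 2
abbrev FFaux := lp (fun _ : ℕ => EuclideanSpace ℂ (Fin 2)) 2

instance : Nontrivial EEaux := by
  refine ⟨lp.single 2 (0:ℤ) (EuclideanSpace.single 0 (1:ℂ)), 0, fun h => ?_⟩
  have := congrArg (fun v : EEaux => v 0 0) h
  simp only [lp.single_apply_self] at this
  rw [lp.coeFn_zero] at this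
  simp [EuclideanSpace.single_apply] at this

instance : Nontrivial FFaux := by
  refine ⟨lp.single 2 (0:ℕ) (EuclideanSpace.single 0 (1:ℂ)), 0, fun h => ?_⟩
  have := congrArg (fun v : FFaux => v 0 0) h
  simp only [lp.single_apply_self] at this
  rw [lp.coeFn_zero] at this
  simp [EuclideanSpace.single_apply] at this

/-- The key property: `g(H₀)∘ι − ι∘g(H₀⁺)` and `ι*∘g(H₀) − g(H₀⁺)∘ι*` are compact. -/
def QPropAux (H₀ : EEaux →L[ℂ] EEaux) (H₀p : FFaux →L[ℂ] FFaux)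
    (ι : FFaux →L[ℂ] EEaux) (ιs : EEaux →L[ℂ] FFaux) (g : ℂ → ℂ) : Prop :=
  IsCompactOperator ⇑(cfc g H₀ ∘L ι - ι ∘L cfc g H₀p) ∧
  IsCompactOperator ⇑(ιs ∘L cfc g H₀ - cfc g H₀p ∘L ιs)

variable (H₀ : EEaux →L[ℂ] EEaux) (H₀p : FFaux →L[ℂ] FFaux)
    (ι : FFaux →L[ℂ] EEaux) (ιs : EEaux →L[ℂ] FFaux)

lemma qprop_mul (hsa : IsSelfAdjoint H₀) (hsap : IsSelfAdjoint H₀p)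
    {g h : ℂ → ℂ} (hg : Continuous g) (hh : Continuous h)
    (Hg : QPropAux H₀ H₀p ι ιs g) (Hh : QPropAux H₀ H₀p ι ιs h) :
    QPropAux H₀ H₀p ι ιs (fun z => g z * h z) := by
  have hN : IsStarNormal H₀ := hsa.isStarNormal
  have hNp : IsStarNormal H₀p := hsap.isStarNormal
  obtain ⟨Hg1, Hg2⟩ := Hg
  obtain ⟨Hh1, Hh2⟩ := Hh
  constructor
  · have key : cfc (fun z => g z * h z) H₀ ∘L ι - ι ∘L cfc (fun z => g z * h z) H₀p
        = cfc g H₀ ∘L (cfc h H₀ ∘L ι - ι ∘L cfc h H₀p)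
          + (cfc g H₀ ∘L ι - ι ∘L cfc g H₀p) ∘L cfc h H₀p := by
      rw [cfc_mul g h H₀ hg.continuousOn hh.continuousOn,
        cfc_mul g h H₀p hg.continuousOn hh.continuousOn]
      refine ContinuousLinearMap.ext fun u => ?_
      simp only [ContinuousLinearMap.sub_apply, ContinuousLinearMap.comp_apply,
        ContinuousLinearMap.add_apply, ContinuousLinearMap.mul_apply, map_sub]
      abel
    rw [key]
    exact aux_add_compact (aux_comp_left _ Hh1) (aux_comp_right _ Hg1)
  · have key : ιs ∘L cfc (fun z => g z * h z) H₀ - cfc (fun z => g z * h z) H₀p ∘L ιs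
        = (ιs ∘L cfc g H₀ - cfc g H₀p ∘L ιs) ∘L cfc h H₀
          + cfc g H₀p ∘L (ιs ∘L cfc h H₀ - cfc h H₀p ∘L ιs) := by
      rw [cfc_mul g h H₀ hg.continuousOn hh.continuousOn,
        cfc_mul g h H₀p hg.continuousOn hh.continuousOn]
      refine ContinuousLinearMap.ext fun u => ?_
      simp only [ContinuousLinearMap.sub_apply, ContinuousLinearMap.comp_apply,
        ContinuousLinearMap.add_apply, ContinuousLinearMap.mul_apply, map_sub]
      abel
    rw [key]
    exact aux_add_compact (aux_comp_right _ Hg2) (aux_comp_left _ Hh2)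

lemma qprop_add (hsa : IsSelfAdjoint H₀) (hsap : IsSelfAdjoint H₀p)
    {g h : ℂ → ℂ} (hg : Continuous g) (hh : Continuous h)
    (Hg : QPropAux H₀ H₀p ι ιs g) (Hh : QPropAux H₀ H₀p ι ιs h) :
    QPropAux H₀ H₀p ι ιs (fun z => g z + h z) := by
  have hN : IsStarNormal H₀ := hsa.isStarNormal
  have hNp : IsStarNormal H₀p := hsap.isStarNormal
  obtain ⟨Hg1, Hg2⟩ := Hg
  obtain ⟨Hh1, Hh2⟩ := Hh
  constructor
  · have key : cfc (fun z => g z + h z) H₀ ∘L ι - ι ∘L cfc (fun z => g z + h z) H₀p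
        = (cfc g H₀ ∘L ι - ι ∘L cfc g H₀p) + (cfc h H₀ ∘L ι - ι ∘L cfc h H₀p) := by
      rw [cfc_add H₀ g h hg.continuousOn hh.continuousOn,
        cfc_add H₀p g h hg.continuousOn hh.continuousOn]
      refine ContinuousLinearMap.ext fun u => ?_
      simp only [ContinuousLinearMap.sub_apply, ContinuousLinearMap.comp_apply,
        ContinuousLinearMap.add_apply, map_add]
      abel
    rw [key]
    exact aux_add_compact Hg1 Hh1
  · have key : ιs ∘L cfc (fun z => g z + h z) H₀ - cfc (fun z => g z + h z) H₀p ∘L ιs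
        = (ιs ∘L cfc g H₀ - cfc g H₀p ∘L ιs) + (ιs ∘L cfc h H₀ - cfc h H₀p ∘L ιs) := by
      rw [cfc_add H₀ g h hg.continuousOn hh.continuousOn,
        cfc_add H₀p g h hg.continuousOn hh.continuousOn]
      refine ContinuousLinearMap.ext fun u => ?_
      simp only [ContinuousLinearMap.sub_apply, ContinuousLinearMap.comp_apply,
        ContinuousLinearMap.add_apply, map_add]
      abel
    rw [key]
    exact aux_add_compact Hg2 Hh2

lemma qprop_X (hsa : IsSelfAdjoint H₀) (hsap : IsSelfAdjoint H₀p)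
    (hK : IsCompactOperator ⇑(H₀ ∘L ι - ι ∘L H₀p))
    (hK2 : IsCompactOperator ⇑(ιs ∘L H₀ - H₀p ∘L ιs)) :
    QPropAux H₀ H₀p ι ιs (fun z : ℂ => (z.re : ℂ)) := by
  have hN : IsStarNormal H₀ := hsa.isStarNormal
  have hNp : IsStarNormal H₀p := hsap.isStarNormal
  have hA : cfc (fun z : ℂ => (z.re : ℂ)) H₀ = H₀ := by
    rw [cfc_congr (g := fun z : ℂ => z)
      (fun z hz => (hsa.mem_spectrum_eq_re hz).symm)]
    exact cfc_id' ℂ H₀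
  have hB : cfc (fun z : ℂ => (z.re : ℂ)) H₀p = H₀p := by
    rw [cfc_congr (g := fun z : ℂ => z)
      (fun z hz => (hsap.mem_spectrum_eq_re hz).symm)]
    exact cfc_id' ℂ H₀p
  rw [QPropAux, hA, hB]
  exact ⟨hK, hK2⟩

lemma qprop_const (hsa : IsSelfAdjoint H₀) (hsap : IsSelfAdjoint H₀p) (r : ℂ) :
    QPropAux H₀ H₀p ι ιs (fun _ : ℂ => r) := by
  have hN : IsStarNormal H₀ := hsa.isStarNormal
  have hNp : IsStarNormal H₀p := hsap.isStarNormal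
  have hA : cfc (fun _ : ℂ => r) H₀ = algebraMap ℂ _ r := cfc_const r H₀
  have hB : cfc (fun _ : ℂ => r) H₀p = algebraMap ℂ _ r := cfc_const r H₀p
  rw [QPropAux, hA, hB]
  have h0 : (algebraMap ℂ _ r) ∘L ι - ι ∘L (algebraMap ℂ _ r) = 0 := by
    refine ContinuousLinearMap.ext fun u => ?_
    simp [Algebra.algebraMap_eq_smul_one, ContinuousLinearMap.smul_apply,
      ContinuousLinearMap.one_apply, map_smul]
  have h0' : ιs ∘L (algebraMap ℂ _ r) - (algebraMap ℂ _ r) ∘L ιs = 0 := by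
    refine ContinuousLinearMap.ext fun u => ?_
    simp [Algebra.algebraMap_eq_smul_one, ContinuousLinearMap.smul_apply,
      ContinuousLinearMap.one_apply, map_smul]
  rw [h0, h0']
  exact ⟨by simpa using (isCompactOperator_zero :
      IsCompactOperator (0 : FFaux → EEaux)),
    by simpa using (isCompactOperator_zero :
      IsCompactOperator (0 : EEaux → FFaux))⟩

lemma qprop_smulI (hsa : IsSelfAdjoint H₀) (hsap : IsSelfAdjoint H₀p)
    {g : ℂ → ℂ} (hg : Continuous g) (Hg : QPropAux H₀ H₀p ι ιs g) :
    QPropAux H₀ H₀p ι ιs (fun z => I * g z) := by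
  have hN : IsStarNormal H₀ := hsa.isStarNormal
  have hNp : IsStarNormal H₀p := hsap.isStarNormal
  obtain ⟨Hg1, Hg2⟩ := Hg
  rw [QPropAux, cfc_const_mul I g H₀ hg.continuousOn,
    cfc_const_mul I g H₀p hg.continuousOn]
  constructor
  · have : (I • cfc g H₀) ∘L ι - ι ∘L (I • cfc g H₀p)
        = I • (cfc g H₀ ∘L ι - ι ∘L cfc g H₀p) := by
      rw [ContinuousLinearMap.smul_comp, ContinuousLinearMap.comp_smul, smul_sub]
    rw [this, ContinuousLinearMap.coe_smul']
    exact Hg1.smul I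
  · have : ιs ∘L (I • cfc g H₀) - (I • cfc g H₀p) ∘L ιs
        = I • (ιs ∘L cfc g H₀ - cfc g H₀p ∘L ιs) := by
      rw [ContinuousLinearMap.smul_comp, ContinuousLinearMap.comp_smul, smul_sub]
    rw [this, ContinuousLinearMap.coe_smul']
    exact Hg2.smul I

lemma qprop_poly (hsa : IsSelfAdjoint H₀) (hsap : IsSelfAdjoint H₀p)
    (hK : IsCompactOperator ⇑(H₀ ∘L ι - ι ∘L H₀p))
    (hK2 : IsCompactOperator ⇑(ιs ∘L H₀ - H₀p ∘L ιs)) (p : Polynomial ℝ) :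
    QPropAux H₀ H₀p ι ιs (fun z : ℂ => ((p.eval z.re : ℝ) : ℂ)) := by
  induction p using Polynomial.induction_on with
  | C r =>
      simpa only [Polynomial.eval_C] using qprop_const H₀ H₀p ι ιs hsa hsap (r : ℂ)
  | add p q hp hq =>
      have : (fun z : ℂ => (((p + q).eval z.re : ℝ) : ℂ))
          = fun z : ℂ => ((p.eval z.re : ℝ) : ℂ) + ((q.eval z.re : ℝ) : ℂ) := by
        funext z; push_cast [Polynomial.eval_add]; ring
      rw [this]
      exact qprop_add H₀ H₀p ι ιs hsa hsap
        (continuous_ofReal.comp (p.continuous.comp continuous_re))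
        (continuous_ofReal.comp (q.continuous.comp continuous_re)) hp hq
  | monomial n r hp =>
      have : (fun z : ℂ => (((Polynomial.C r * Polynomial.X ^ (n + 1)).eval z.re : ℝ) : ℂ))
          = fun z : ℂ => (((Polynomial.C r * Polynomial.X ^ n).eval z.re : ℝ) : ℂ)
            * ((z.re : ℝ) : ℂ) := by
        funext z
        push_cast [Polynomial.eval_mul, Polynomial.eval_pow, Polynomial.eval_X,
          Polynomial.eval_C]
        ring
      rw [this]
      exact qprop_mul H₀ H₀p ι ιs hsa hsap
        (continuous_ofReal.comp ((Polynomial.C r * Polynomial.X ^ n).continuous.comp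
          continuous_re))
        (continuous_ofReal.comp continuous_re) hp
        (qprop_X H₀ H₀p ι ιs hsa hsap hK hK2)

lemma qprop_cont (hsa : IsSelfAdjoint H₀) (hsap : IsSelfAdjoint H₀p)
    (hK : IsCompactOperator ⇑(H₀ ∘L ι - ι ∘L H₀p))
    (hK2 : IsCompactOperator ⇑(ιs ∘L H₀ - H₀p ∘L ιs))
    {g : ℂ → ℂ} (hg : Continuous g) : QPropAux H₀ H₀p ι ιs g := by
  have hN : IsStarNormal H₀ := hsa.isStarNormal
  have hNp : IsStarNormal H₀p := hsap.isStarNormal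
  set M : ℝ := max ‖H₀‖ ‖H₀p‖ with hM
  have hspec : ∀ z ∈ spectrum ℂ H₀, z = (z.re : ℂ) ∧ z.re ∈ Set.Icc (-M) M := by
    intro z hz
    refine ⟨hsa.mem_spectrum_eq_re hz, ?_⟩
    have h1 : ‖z‖ ≤ ‖H₀‖ := spectrum.norm_le_norm_of_mem hz
    have h2 : |z.re| ≤ ‖z‖ := by exact Complex.abs_re_le_norm z
    have : |z.re| ≤ M := le_trans h2 (le_trans h1 (le_max_left _ _))
    exact Set.mem_Icc.mpr (abs_le.mp this)
  have hspecp : ∀ z ∈ spectrum ℂ H₀p, z = (z.re : ℂ) ∧ z.re ∈ Set.Icc (-M) M := by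
    intro z hz
    refine ⟨hsap.mem_spectrum_eq_re hz, ?_⟩
    have h1 : ‖z‖ ≤ ‖H₀p‖ := spectrum.norm_le_norm_of_mem hz
    have h2 : |z.re| ≤ ‖z‖ := by exact Complex.abs_re_le_norm z
    have : |z.re| ≤ M := le_trans h2 (le_trans h1 (le_max_right _ _))
    exact Set.mem_Icc.mpr (abs_le.mp this)
  -- approximation by polynomial functions
  have happrox : ∀ n : ℕ, ∃ gc : ℂ → ℂ, Continuous gc ∧ QPropAux H₀ H₀p ι ιs gc ∧
      (∀ x ∈ Set.Icc (-M) M, ‖g ((x : ℝ) : ℂ) - gc ((x : ℝ) : ℂ)‖ ≤ 2 / (n + 1)) ∧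
      (∀ z : ℂ, gc z = gc ((z.re : ℝ) : ℂ)) := by
    intro n
    have hpos : (0 : ℝ) < 1 / (n + 1) := by positivity
    obtain ⟨p, hp⟩ := exists_polynomial_near_of_continuousOn (-M) M
      (fun x : ℝ => (g ((x : ℝ) : ℂ)).re)
      ((Complex.continuous_re.comp (hg.comp Complex.continuous_ofReal)).continuousOn)
      (1 / (n + 1)) hpos
    obtain ⟨q, hq⟩ := exists_polynomial_near_of_continuousOn (-M) M
      (fun x : ℝ => (g ((x : ℝ) : ℂ)).im)
      ((Complex.continuous_im.comp (hg.comp Complex.continuous_ofReal)).continuousOn)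
      (1 / (n + 1)) hpos
    refine ⟨fun z => ((p.eval z.re : ℝ) : ℂ) + I * ((q.eval z.re : ℝ) : ℂ), ?_, ?_, ?_, ?_⟩
    · exact (continuous_ofReal.comp (p.continuous.comp continuous_re)).add
        (continuous_const.mul (continuous_ofReal.comp (q.continuous.comp continuous_re)))
    · exact qprop_add H₀ H₀p ι ιs hsa hsap
        (continuous_ofReal.comp (p.continuous.comp continuous_re))
        (continuous_const.mul (continuous_ofReal.comp (q.continuous.comp continuous_re)))
        (qprop_poly H₀ H₀p ι ιs hsa hsap hK hK2 p)
        (qprop_smulI H₀ H₀p ι ιs hsa hsap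
          (continuous_ofReal.comp (q.continuous.comp continuous_re))
          (qprop_poly H₀ H₀p ι ιs hsa hsap hK hK2 q))
    · intro x hx
      have hre : ((x : ℂ)).re = x := by simp
      set w : ℂ := g ((x : ℝ) : ℂ) - (((p.eval ((x:ℂ).re) : ℝ) : ℂ)
        + I * ((q.eval ((x:ℂ).re) : ℝ) : ℂ)) with hw
      have hwre : w.re = (g ((x : ℝ) : ℂ)).re - p.eval x := by
        rw [hw]; simp [hre]
      have hwim : w.im = (g ((x : ℝ) : ℂ)).im - q.eval x := by
        rw [hw]; simp [hre]
      have : ‖w‖ ≤ |w.re| + |w.im| := by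
        exact Complex.norm_le_abs_re_add_abs_im w
      refine le_trans this ?_
      rw [hwre, hwim]
      have hb1 := hp x hx
      have hb2 := hq x hx
      rw [abs_sub_comm] at hb1 hb2
      have : (1:ℝ) / (n+1) + 1 / (n+1) = 2 / (n+1) := by ring
      linarith
    · intro z; simp
  have hmain : ∀ n : ℕ,
      ∃ gc : ℂ → ℂ, QPropAux H₀ H₀p ι ιs gc ∧
        ‖cfc g H₀ - cfc gc H₀‖ ≤ 2 / (n + 1) ∧ ‖cfc g H₀p - cfc gc H₀p‖ ≤ 2 / (n + 1) := by
    intro n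
    obtain ⟨gc, hgcc, hq, hbound, hconst⟩ := happrox n
    have hpos : (0:ℝ) ≤ 2 / (n+1) := by positivity
    refine ⟨gc, hq, ?_, ?_⟩
    · rw [← cfc_sub g gc H₀ hg.continuousOn hgcc.continuousOn]
      refine norm_cfc_le hpos fun z hz => ?_
      obtain ⟨hz1, hz2⟩ := hspec z hz
      have hb := hbound z.re hz2
      rw [← hz1] at hb
      exact hb
    · rw [← cfc_sub g gc H₀p hg.continuousOn hgcc.continuousOn]
      refine norm_cfc_le hpos fun z hz => ?_
      obtain ⟨hz1, hz2⟩ := hspecp z hz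
      have hb := hbound z.re hz2
      rw [← hz1] at hb
      exact hb
  constructor
  · refine aux_compact_of_approx _ (4 * ‖ι‖) ?_
    intro n
    obtain ⟨gc, ⟨hgc1, _⟩, hn1, hn2⟩ := hmain n
    refine ⟨cfc gc H₀ ∘L ι - ι ∘L cfc gc H₀p, hgc1, ?_⟩
    have hD : (cfc g H₀ ∘L ι - ι ∘L cfc g H₀p) - (cfc gc H₀ ∘L ι - ι ∘L cfc gc H₀p)
        = (cfc g H₀ - cfc gc H₀) ∘L ι - ι ∘L (cfc g H₀p - cfc gc H₀p) := by
      rw [ContinuousLinearMap.sub_comp, ContinuousLinearMap.comp_sub]; abel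
    rw [hD]
    calc ‖(cfc g H₀ - cfc gc H₀) ∘L ι - ι ∘L (cfc g H₀p - cfc gc H₀p)‖
        ≤ ‖(cfc g H₀ - cfc gc H₀) ∘L ι‖ + ‖ι ∘L (cfc g H₀p - cfc gc H₀p)‖ := norm_sub_le _ _
      _ ≤ ‖cfc g H₀ - cfc gc H₀‖ * ‖ι‖ + ‖ι‖ * ‖cfc g H₀p - cfc gc H₀p‖ :=
          add_le_add (ContinuousLinearMap.opNorm_comp_le _ _)
            (ContinuousLinearMap.opNorm_comp_le _ _)
      _ ≤ (2 / (n+1)) * ‖ι‖ + ‖ι‖ * (2 / (n+1)) :=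
          add_le_add (mul_le_mul_of_nonneg_right hn1 (norm_nonneg ι))
            (mul_le_mul_of_nonneg_left hn2 (norm_nonneg ι))
      _ = 4 * ‖ι‖ / (n+1) := by ring
  · refine aux_compact_of_approx _ (4 * ‖ιs‖) ?_
    intro n
    obtain ⟨gc, ⟨_, hgc2⟩, hn1, hn2⟩ := hmain n
    refine ⟨ιs ∘L cfc gc H₀ - cfc gc H₀p ∘L ιs, hgc2, ?_⟩
    have hD : (ιs ∘L cfc g H₀ - cfc g H₀p ∘L ιs) - (ιs ∘L cfc gc H₀ - cfc gc H₀p ∘L ιs)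
        = ιs ∘L (cfc g H₀ - cfc gc H₀) - (cfc g H₀p - cfc gc H₀p) ∘L ιs := by
      rw [ContinuousLinearMap.sub_comp, ContinuousLinearMap.comp_sub]; abel
    rw [hD]
    calc ‖ιs ∘L (cfc g H₀ - cfc gc H₀) - (cfc g H₀p - cfc gc H₀p) ∘L ιs‖
        ≤ ‖ιs ∘L (cfc g H₀ - cfc gc H₀)‖ + ‖(cfc g H₀p - cfc gc H₀p) ∘L ιs‖ := norm_sub_le _ _
      _ ≤ ‖ιs‖ * ‖cfc g H₀ - cfc gc H₀‖ + ‖cfc g H₀p - cfc gc H₀p‖ * ‖ιs‖ :=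
          add_le_add (ContinuousLinearMap.opNorm_comp_le _ _)
            (ContinuousLinearMap.opNorm_comp_le _ _)
      _ ≤ ‖ιs‖ * (2 / (n+1)) + (2 / (n+1)) * ‖ιs‖ :=
          add_le_add (mul_le_mul_of_nonneg_left hn1 (norm_nonneg ιs))
            (mul_le_mul_of_nonneg_right hn2 (norm_nonneg ιs))
      _ = 4 * ‖ιs‖ / (n+1) := by ring

end

/-- For every continuous compactly supported `Φ : ℝ → ℂ`,
`Φ(H₀⁺) − ι*∘Φ(H₀)∘ι` is compact on `ℓ²(ℤ₊;ℂ²)`, and `P∘Φ(H₀)∘P^⊥`, `P^⊥∘Φ(H₀)∘P`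
are compact on `ℓ²(ℤ;ℂ²)`, where `P = ι∘ι*`. Here `Φ(T)` is the continuous functional
calculus of the self-adjoint operator `T`, realized as `cfc (fun z : ℂ => Φ z.re) T`
(which agrees with the usual definition since the spectrum of `T` is real). -/
theorem compactness_functional_calculus (α : ℝ) (a b : ℂ) (ha : a ≠ 0) (hb : b ≠ 0)
    (H₀ : lp (fun _ : ℤ => EuclideanSpace ℂ (Fin 2)) 2 →L[ℂ]
          lp (fun _ : ℤ => EuclideanSpace ℂ (Fin 2)) 2)
    (hH₀ : ∀ (u : lp (fun _ : ℤ => EuclideanSpace ℂ (Fin 2)) 2) (n : ℤ),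
      H₀ u n 0 = (α : ℂ) * u n 0 + (starRingEnd ℂ) a * u n 1
          + (starRingEnd ℂ) b * u (n + 1) 1 ∧
      H₀ u n 1 = a * u n 0 + b * u (n - 1) 0 - (α : ℂ) * u n 1)
    (hH₀sa : IsSelfAdjoint H₀)
    (H₀p : lp (fun _ : ℕ => EuclideanSpace ℂ (Fin 2)) 2 →L[ℂ]
           lp (fun _ : ℕ => EuclideanSpace ℂ (Fin 2)) 2)
    (hH₀p : ∀ (u : lp (fun _ : ℕ => EuclideanSpace ℂ (Fin 2)) 2) (n : ℕ),
      H₀p u n 0 = (α : ℂ) * u n 0 + (starRingEnd ℂ) a * u n 1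
          + (starRingEnd ℂ) b * u (n + 1) 1 ∧
      H₀p u n 1 = a * u n 0 + (if n = 0 then 0 else b * u (n - 1) 0)
          - (α : ℂ) * u n 1)
    (hH₀psa : IsSelfAdjoint H₀p)
    (ι : lp (fun _ : ℕ => EuclideanSpace ℂ (Fin 2)) 2 →L[ℂ]
         lp (fun _ : ℤ => EuclideanSpace ℂ (Fin 2)) 2)
    (hι : ∀ (u : lp (fun _ : ℕ => EuclideanSpace ℂ (Fin 2)) 2) (n : ℤ) (i : Fin 2),
      ι u n i = if 0 ≤ n then u n.toNat i else 0)
    (ιs : lp (fun _ : ℤ => EuclideanSpace ℂ (Fin 2)) 2 →L[ℂ]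
          lp (fun _ : ℕ => EuclideanSpace ℂ (Fin 2)) 2)
    (hιs : ∀ (v : lp (fun _ : ℤ => EuclideanSpace ℂ (Fin 2)) 2) (m : ℕ) (i : Fin 2),
      ιs v m i = v (m : ℤ) i)
    (Φ : ℝ → ℂ) (hΦc : Continuous Φ) (hΦsupp : HasCompactSupport Φ) :
    IsCompactOperator
      (⇑(cfc (fun z : ℂ => Φ z.re) H₀p - ιs ∘L cfc (fun z : ℂ => Φ z.re) H₀ ∘L ι)) ∧
    IsCompactOperator
      (⇑((ι ∘L ιs) ∘L cfc (fun z : ℂ => Φ z.re) H₀ ∘L (1 - ι ∘L ιs))) ∧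
    IsCompactOperator
      (⇑((1 - ι ∘L ιs) ∘L cfc (fun z : ℂ => Φ z.re) H₀ ∘L (ι ∘L ιs))) := by
  -- ι* ∘ ι = 1 pointwise
  have hιι : ∀ u, ιs (ι u) = u := by
    intro u
    apply lp.ext
    funext m
    refine PiLp.ext fun i => ?_
    rw [hιs, hι]
    simp
  -- the first finite-rank commutator
  have hKeq : ⇑(H₀ ∘L ι - ι ∘L H₀p) = fun u => ((starRingEnd ℂ) b * u 0 1) •
      (lp.single 2 (-1 : ℤ) (EuclideanSpace.single 0 1) :
        lp (fun _ : ℤ => EuclideanSpace ℂ (Fin 2)) 2) := by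
    funext u
    apply lp.ext
    funext n
    have lhs : (((H₀ ∘L ι - ι ∘L H₀p) u : lp (fun _ : ℤ => EuclideanSpace ℂ (Fin 2)) 2) n)
        = H₀ (ι u) n - ι (H₀p u) n := by
      rw [ContinuousLinearMap.sub_apply, ContinuousLinearMap.comp_apply,
        ContinuousLinearMap.comp_apply, lp.coeFn_sub, Pi.sub_apply]
    refine PiLp.ext fun i => ?_
    rw [lhs]
    rw [lp.coeFn_smul, Pi.smul_apply]
    fin_cases i
    · show H₀ (ι u) n 0 - ι (H₀p u) n 0 = _
      rw [(hH₀ (ι u) n).1, hι, hι u, hι u, hι]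
      rw [lp.single_apply]
      rcases lt_trichotomy n (-1) with h | h | h
      · have h0 : ¬ (0 ≤ n) := by omega
        have h1 : ¬ (0 ≤ n + 1) := by omega
        have h2 : ¬ (n = -1) := by omega
        simp only [if_neg h0, if_neg h1, dif_neg h2]
        simp [Pi.single_apply, h2]
      · subst h
        norm_num
        simp [EuclideanSpace.single_apply, PiLp.smul_apply, smul_eq_mul]
      · have h0 : (0 ≤ n) := by omega
        have h1 : (0 ≤ n + 1) := by omega
        have h2 : ¬ (n = -1) := by omega
        simp only [if_pos h0, if_pos h1, dif_neg h2]
        rw [(hH₀p u n.toNat).1]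
        have : (n + 1).toNat = n.toNat + 1 := by omega
        rw [this]
        simp [Pi.single_apply, h2]
    · show H₀ (ι u) n 1 - ι (H₀p u) n 1 = _
      rw [(hH₀ (ι u) n).2, hι, hι u, hι u, hι]
      rw [lp.single_apply]
      rcases lt_trichotomy n (-1) with h | h | h
      · have h0 : ¬ (0 ≤ n) := by omega
        have h1 : ¬ (0 ≤ n - 1) := by omega
        have h2 : ¬ (n = -1) := by omega
        simp only [if_neg h0, if_neg h1, dif_neg h2]
        simp [Pi.single_apply, h2]
      · subst h
        norm_num [EuclideanSpace.single_apply, PiLp.smul_apply, smul_eq_mul]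
      · have h0 : (0 ≤ n) := by omega
        have h2 : ¬ (n = -1) := by omega
        simp only [if_pos h0, dif_neg h2]
        rw [(hH₀p u n.toNat).2]
        rcases eq_or_lt_of_le (show (0:ℤ) ≤ n by omega) with h3 | h3
        · have hn0 : n = 0 := by omega
          subst hn0
          have : ¬ (0 ≤ (0:ℤ) - 1) := by omega
          simp only [if_neg this, if_pos rfl]
          simp [Pi.single_apply]
        · have hn1 : (0:ℤ) ≤ n - 1 := by omega
          have hnn : ¬ (n.toNat = 0) := by omega
          simp only [if_pos hn1, if_neg hnn]
          have : (n - 1).toNat = n.toNat - 1 := by omega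
          rw [this]
          simp [Pi.single_apply, h2]
  -- the second finite-rank commutator
  have hK2eq : ⇑(ιs ∘L H₀ - H₀p ∘L ιs) = fun v => (b * v (-1) 0) •
      (lp.single 2 (0 : ℕ) (EuclideanSpace.single 1 1) :
        lp (fun _ : ℕ => EuclideanSpace ℂ (Fin 2)) 2) := by
    funext v
    apply lp.ext
    funext m
    have lhs : (((ιs ∘L H₀ - H₀p ∘L ιs) v : lp (fun _ : ℕ => EuclideanSpace ℂ (Fin 2)) 2) m)
        = ιs (H₀ v) m - H₀p (ιs v) m := by
      rw [ContinuousLinearMap.sub_apply, ContinuousLinearMap.comp_apply,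
        ContinuousLinearMap.comp_apply, lp.coeFn_sub, Pi.sub_apply]
    refine PiLp.ext fun i => ?_
    rw [lhs]
    rw [lp.coeFn_smul, Pi.smul_apply]
    fin_cases i
    · show ιs (H₀ v) m 0 - H₀p (ιs v) m 0 = _
      rw [hιs, (hH₀ v m).1, (hH₀p (ιs v) m).1]
      simp only [hιs]
      have hcast : ((m + 1 : ℕ) : ℤ) = (m : ℤ) + 1 := by push_cast; ring
      rw [hcast, lp.single_apply]
      rcases eq_or_ne m 0 with hm | hm
      · subst hm
        norm_num [EuclideanSpace.single_apply, PiLp.smul_apply, smul_eq_mul]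
      · simp only [Pi.single_apply, if_neg hm]
        simp
    · show ιs (H₀ v) m 1 - H₀p (ιs v) m 1 = _
      rw [hιs, (hH₀ v m).2, (hH₀p (ιs v) m).2]
      simp only [hιs]
      rw [lp.single_apply]
      rcases eq_or_ne m 0 with hm | hm
      · subst hm
        norm_num [EuclideanSpace.single_apply, PiLp.smul_apply, smul_eq_mul]
      · simp only [if_neg hm, Pi.single_apply]
        have hcast : ((m - 1 : ℕ) : ℤ) = (m : ℤ) - 1 := by
          have : 1 ≤ m := Nat.one_le_iff_ne_zero.mpr hm
          push_cast [this]; ring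
        rw [hcast]
        simp
  -- compactness of the commutators
  have hK : IsCompactOperator ⇑(H₀ ∘L ι - ι ∘L H₀p) := by
    rw [hKeq]
    refine aux_rankOne_compact _ ‖b‖ (fun u => ?_) _
    rw [norm_mul, RCLike.norm_conj]
    exact mul_le_mul_of_nonneg_left
      ((aux_coord_le _ 1).trans (lp.norm_apply_le_norm (by norm_num) u 0))
      (norm_nonneg b)
  have hK2 : IsCompactOperator ⇑(ιs ∘L H₀ - H₀p ∘L ιs) := by
    rw [hK2eq]
    refine aux_rankOne_compact _ ‖b‖ (fun v => ?_) _
    rw [norm_mul]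
    exact mul_le_mul_of_nonneg_left
      ((aux_coord_le _ 0).trans (lp.norm_apply_le_norm (by norm_num) v (-1)))
      (norm_nonneg b)
  -- the key compactness property for the continuous function
  obtain ⟨hQ1, hQ2⟩ := qprop_cont H₀ H₀p ι ιs hH₀sa hH₀psa hK hK2
    (g := fun z : ℂ => Φ z.re) (hΦc.comp continuous_re)
  set A := cfc (fun z : ℂ => Φ z.re) H₀ with hA
  set B := cfc (fun z : ℂ => Φ z.re) H₀p with hB
  refine ⟨?_, ?_, ?_⟩
  · have key : B - ιs ∘L A ∘L ι = -((ιs ∘L A - B ∘L ιs) ∘L ι) := by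
      refine ContinuousLinearMap.ext fun u => ?_
      simp only [ContinuousLinearMap.sub_apply, ContinuousLinearMap.comp_apply,
        ContinuousLinearMap.neg_apply, hιι]
      abel
    rw [key]
    exact aux_neg_compact (aux_comp_right ι hQ2)
  · have key : (ι ∘L ιs) ∘L A ∘L (1 - ι ∘L ιs)
        = ι ∘L ((ιs ∘L A - B ∘L ιs) ∘L (1 - ι ∘L ιs)) := by
      refine ContinuousLinearMap.ext fun u => ?_
      simp only [ContinuousLinearMap.sub_apply, ContinuousLinearMap.comp_apply,
        ContinuousLinearMap.one_apply, map_sub, hιι, sub_self, map_zero, sub_zero]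
      abel
    rw [key]
    exact aux_comp_left ι (aux_comp_right _ hQ2)
  · have key : (1 - ι ∘L ιs) ∘L A ∘L (ι ∘L ιs)
        = (1 - ι ∘L ιs) ∘L ((A ∘L ι - ι ∘L B) ∘L ιs) := by
      refine ContinuousLinearMap.ext fun u => ?_
      simp only [ContinuousLinearMap.sub_apply, ContinuousLinearMap.comp_apply,
        ContinuousLinearMap.one_apply, map_sub, hιι, sub_self, map_zero, sub_zero]
    rw [key]
    exact aux_comp_left _ (aux_comp_right ιs hQ1)
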